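/- Let M be an MV-effect algebra. Define x ⊞ y = x ⊕ (x' ∧ y). Then (M, ⊞, ', 0) is an MV-algebra; i.e., ⊞ is a total, commutative, associative operation with unit 0, ¬¬x = x where ¬x = x', x ⊞ ¬0 = ¬0, and x ⊞ ¬(x ⊞ ¬y) = y ⊞ ¬(y ⊞ ¬x) for all x, y. -/
import Mathlib


/-- An effect algebra: a partial algebra `(α; ⊕, 0, 1)`.  The partial operation is
encoded by a total function `add` together with a definedness predicate `D`. -/
structure EffectAlgebra (α : Type*) where
  D : α → α → Prop
  add : α → α → α
  zero : α
  one : α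
  comm_def : ∀ a b, D a b → D b a
  comm : ∀ a b, D a b → add a b = add b a
  assoc_def₁ : ∀ a b c, D a b → D (add a b) c → D b c
  assoc_def₂ : ∀ a b c, D a b → D (add a b) c → D a (add b c)
  assoc : ∀ a b c, D a b → D (add a b) c → add (add a b) c = add a (add b c)
  orth_exists : ∀ a, ∃! b, D a b ∧ add a b = one
  add_one : ∀ a, D a one → a = zero

namespace EffectAlgebra

variable {α : Type*}
open Classical

/-- The induced order: `a ≤ b` iff `∃ c, a ⊕ c = b`. -/
def le (E : EffectAlgebra α) (a b : α) : Prop := ∃ c, E.D a c ∧ E.add a c = b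

/-- The orthosupplement `a'`. -/
noncomputable def orth (E : EffectAlgebra α) (a : α) : α := (E.orth_exists a).choose

/-- Partial difference: `sub b a = b ⊖ a`, intended for `a ≤ b`. -/
noncomputable def sub (E : EffectAlgebra α) (b a : α) : α :=
  if h : ∃ c, E.D a c ∧ E.add a c = b then h.choose else E.zero

end EffectAlgebra

namespace EffectAlgebra

variable {α : Type*} {E : EffectAlgebra α}

lemma orth_D (a : α) : E.D a (E.orth a) := (E.orth_exists a).choose_spec.1.1

lemma add_orth (a : α) : E.add a (E.orth a) = E.one := (E.orth_exists a).choose_spec.1.2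

lemma orth_unique {a b : α} (h : E.D a b) (h2 : E.add a b = E.one) : b = E.orth a :=
  (E.orth_exists a).choose_spec.2 b ⟨h, h2⟩

lemma orth_orth (a : α) : E.orth (E.orth a) = a := by
  have h := orth_D (E := E) a
  exact (orth_unique (E.comm_def _ _ h)
    (by rw [E.comm (E.orth a) a (E.comm_def _ _ h)]; exact add_orth a)).symm

lemma orth_inj {a b : α} (h : E.orth a = E.orth b) : a = b := by
  rw [← orth_orth (E := E) a, h, orth_orth]

lemma assoc_rev {a b c : α} (hbc : E.D b c) (ha : E.D a (E.add b c)) :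
    E.D a b ∧ E.D (E.add a b) c ∧ E.add a (E.add b c) = E.add (E.add a b) c := by
  have hcb : E.D c b := E.comm_def b c hbc
  have h1 : E.add b c = E.add c b := E.comm b c hbc
  have h2 : E.D a (E.add c b) := h1 ▸ ha
  have h3 : E.D (E.add c b) a := E.comm_def _ _ h2
  have h4 : E.D b a := E.assoc_def₁ c b a hcb h3
  have hab : E.D a b := E.comm_def _ _ h4
  have h5 : E.D c (E.add b a) := E.assoc_def₂ c b a hcb h3
  have h6 : E.D c (E.add a b) := (E.comm b a h4) ▸ h5
  have h8 : E.D (E.add a b) c := E.comm_def _ _ h6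
  exact ⟨hab, h8, (E.assoc a b c hab h8).symm⟩

lemma add_orth_add {a b : α} (h : E.D a b) :
    E.D b (E.orth (E.add a b)) ∧ E.add b (E.orth (E.add a b)) = E.orth a := by
  have h1 : E.D (E.add a b) (E.orth (E.add a b)) := orth_D _
  have hbt : E.D b (E.orth (E.add a b)) := E.assoc_def₁ a b _ h h1
  have hat : E.D a (E.add b (E.orth (E.add a b))) := E.assoc_def₂ a b _ h h1
  have hv : E.add a (E.add b (E.orth (E.add a b))) = E.one := by
    rw [← E.assoc a b _ h h1, add_orth]
  exact ⟨hbt, orth_unique hat hv⟩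

lemma cancel {a b c : α} (hab : E.D a b) (hac : E.D a c) (h : E.add a b = E.add a c) :
    b = c := by
  have h1 := add_orth_add (E.comm_def a b hab)
  have h2 := add_orth_add (E.comm_def a c hac)
  rw [E.comm b a (E.comm_def a b hab)] at h1
  rw [E.comm c a (E.comm_def a c hac)] at h2
  have h3 : E.orth b = E.orth c := by rw [← h1.2, ← h2.2, h]
  exact orth_inj h3

lemma orth_one : E.orth E.one = E.zero :=
  E.add_one _ (E.comm_def _ _ (orth_D E.one))

lemma D_one_zero : E.D E.one E.zero := by
  rw [← orth_one]; exact orth_D E.one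

lemma add_one_zero : E.add E.one E.zero = E.one := by
  rw [← orth_one]; exact add_orth E.one

lemma orth_zero : E.orth E.zero = E.one := by
  rw [← orth_one, orth_orth]

lemma D_zero (a : α) : E.D a E.zero ∧ E.add a E.zero = a := by
  have key : ∀ b : α, E.D (E.orth b) E.zero ∧ E.add (E.orth b) E.zero = E.orth b := by
    intro b
    have h1 : E.D b (E.orth b) := orth_D b
    have h2 : E.D (E.add b (E.orth b)) E.zero := by rw [add_orth]; exact D_one_zero
    have h3 : E.D (E.orth b) E.zero := E.assoc_def₁ _ _ _ h1 h2
    have h4 : E.D b (E.add (E.orth b) E.zero) := E.assoc_def₂ _ _ _ h1 h2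
    have h5 : E.add b (E.add (E.orth b) E.zero) = E.one := by
      rw [← E.assoc _ _ _ h1 h2, add_orth, add_one_zero]
    exact ⟨h3, orth_unique h4 h5⟩
  have h := key (E.orth a)
  rwa [orth_orth] at h

lemma le_refl' (a : α) : E.le a a := ⟨E.zero, (D_zero a).1, (D_zero a).2⟩

lemma le_trans' {a b c : α} (h1 : E.le a b) (h2 : E.le b c) : E.le a c := by
  obtain ⟨d, hd, hd2⟩ := h1
  obtain ⟨e, he, he2⟩ := h2
  subst hd2
  exact ⟨E.add d e, E.assoc_def₂ a d e hd he,
    by rw [← E.assoc a d e hd he]; exact he2⟩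

lemma zero_le' (a : α) : E.le E.zero a :=
  ⟨a, E.comm_def _ _ (D_zero a).1,
    by rw [E.comm _ _ (E.comm_def _ _ (D_zero a).1)]; exact (D_zero a).2⟩

lemma le_one' (a : α) : E.le a E.one := ⟨E.orth a, orth_D a, add_orth a⟩

lemma eq_zero_of_add_eq_zero {a b : α} (h : E.D a b) (h2 : E.add a b = E.zero) :
    a = E.zero := by
  have h3 : E.D (E.add a b) E.one := by rw [h2]; exact E.comm_def _ _ D_one_zero
  have h4 : E.D b E.one := E.assoc_def₁ a b _ h h3
  have hb : b = E.zero := E.add_one b h4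
  rw [hb] at h2
  rw [← (D_zero a).2]; exact h2

lemma le_antisymm' {a b : α} (h1 : E.le a b) (h2 : E.le b a) : a = b := by
  obtain ⟨c, hc, hc2⟩ := h1
  obtain ⟨d, hd, hd2⟩ := h2
  subst hc2
  have hcd : E.D c d := E.assoc_def₁ a c d hc hd
  have h3 : E.D a (E.add c d) := E.assoc_def₂ a c d hc hd
  have h4 : E.add a (E.add c d) = E.add a E.zero := by
    rw [← E.assoc a c d hc hd, hd2, (D_zero a).2]
  have h5 : E.add c d = E.zero := cancel h3 (D_zero a).1 h4
  have hc0 : c = E.zero := eq_zero_of_add_eq_zero hcd h5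
  rw [hc0, (D_zero a).2]

lemma le_orth_of_D {a b : α} (h : E.D a b) : E.le b (E.orth a) :=
  ⟨E.orth (E.add a b), (add_orth_add h).1, (add_orth_add h).2⟩

lemma D_of_le_orth {a b : α} (h : E.le b (E.orth a)) : E.D a b := by
  obtain ⟨c, hbc, h2⟩ := h
  have ha : E.D a (E.add b c) := by rw [h2]; exact orth_D a
  exact (assoc_rev hbc ha).1

lemma orth_le_orth {a b : α} (h : E.le a b) : E.le (E.orth b) (E.orth a) := by
  obtain ⟨c, hc, hc2⟩ := h
  subst hc2
  obtain ⟨h2, h4⟩ := add_orth_add hc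
  exact ⟨c, E.comm_def _ _ h2,
    by rw [E.comm _ _ (E.comm_def _ _ h2)]; exact h4⟩

lemma D_of_le_D {a b c : α} (h : E.D a b) (h2 : E.le c b) : E.D a c :=
  D_of_le_orth (le_trans' h2 (le_orth_of_D h))

lemma add_le_add_right' {a c d : α} (hd : E.D a d) (h : E.le c d) :
    E.D a c ∧ E.le (E.add a c) (E.add a d) := by
  obtain ⟨e, hce, he⟩ := h
  subst he
  obtain ⟨hac, hface, hval⟩ := assoc_rev hce hd
  exact ⟨hac, ⟨e, hface, hval.symm⟩⟩

lemma add_le_add' {a b c d : α} (hab : E.le a b) (hcd : E.le c d) (hbd : E.D b d) :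
    E.D a c ∧ E.le (E.add a c) (E.add b d) := by
  obtain ⟨hbc, h1⟩ := add_le_add_right' hbd hcd
  obtain ⟨hca, h2⟩ := add_le_add_right' (E.comm_def _ _ hbc) hab
  have hac := E.comm_def _ _ hca
  have e1 : E.add c a = E.add a c := E.comm c a hca
  have e2 : E.add c b = E.add b c := E.comm c b (E.comm_def _ _ hbc)
  rw [e1, e2] at h2
  exact ⟨hac, le_trans' h2 h1⟩

lemma cancel_le {a b c : α} (hab : E.D a b) (hac : E.D a c)
    (h : E.le (E.add a b) (E.add a c)) : E.le b c := by
  obtain ⟨e, he, he2⟩ := h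
  have hbe : E.D b e := E.assoc_def₁ a b e hab he
  have h3 : E.D a (E.add b e) := E.assoc_def₂ a b e hab he
  have h4 : E.add a (E.add b e) = E.add a c := by
    rw [← E.assoc a b e hab he]; exact he2
  exact ⟨e, hbe, cancel h3 hac h4⟩

lemma sub_spec {a b : α} (h : E.le a b) : E.D a (E.sub b a) ∧ E.add a (E.sub b a) = b := by
  have h' : ∃ c, E.D a c ∧ E.add a c = b := h
  simp only [EffectAlgebra.sub]
  rw [dif_pos h']
  exact h'.choose_spec

lemma sub_unique {a b c : α} (hd : E.D a c) (h : E.add a c = b) : E.sub b a = c := by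
  have hle : E.le a b := ⟨c, hd, h⟩
  obtain ⟨h1, h2⟩ := sub_spec hle
  exact cancel h1 hd (by rw [h2, h])

end EffectAlgebra
namespace EffectAlgebra

section Lattice

variable {α : Type*} {E : EffectAlgebra α} {sup inf : α → α → α}

variable (hsup : ∀ a b : α, E.le a (sup a b) ∧ E.le b (sup a b) ∧
      ∀ c, E.le a c → E.le b c → E.le (sup a b) c)
variable (hinf : ∀ a b : α, E.le (inf a b) a ∧ E.le (inf a b) b ∧
      ∀ c, E.le c a → E.le c b → E.le c (inf a b))
variable (hmv : ∀ a b : α, E.sub (sup a b) a = E.sub b (inf a b))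

include hsup hinf hmv
set_option linter.unusedSectionVars false

lemma inf_comm' (a b : α) : inf a b = inf b a :=
  le_antisymm' ((hinf b a).2.2 _ (hinf a b).2.1 (hinf a b).1)
    ((hinf a b).2.2 _ (hinf b a).2.1 (hinf b a).1)

lemma sup_comm' (a b : α) : sup a b = sup b a :=
  le_antisymm' ((hsup a b).2.2 _ (hsup b a).2.1 (hsup b a).1)
    ((hsup b a).2.2 _ (hsup a b).2.1 (hsup a b).1)

lemma inf_eq_right' {a b : α} (h : E.le b a) : inf a b = b :=
  le_antisymm' (hinf a b).2.1 ((hinf a b).2.2 b h (le_refl' b))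

lemma inf_eq_left' {a b : α} (h : E.le a b) : inf a b = a :=
  le_antisymm' (hinf a b).1 ((hinf a b).2.2 a (le_refl' a) h)

lemma inf_left_comm' (a b c : α) : inf a (inf b c) = inf b (inf a c) := by
  apply le_antisymm' (E := E)
  · exact (hinf _ _).2.2 _ (le_trans' (hinf a _).2.1 (hinf b c).1)
      ((hinf a c).2.2 _ (hinf a _).1 (le_trans' (hinf a _).2.1 (hinf b c).2.1))
  · exact (hinf _ _).2.2 _ (le_trans' (hinf b _).2.1 (hinf a c).1)
      ((hinf b c).2.2 _ (hinf b _).1 (le_trans' (hinf b _).2.1 (hinf a c).2.1))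

lemma orth_sup' (a b : α) : E.orth (sup a b) = inf (E.orth a) (E.orth b) := by
  apply le_antisymm' (E := E)
  · exact (hinf _ _).2.2 _ (orth_le_orth (hsup a b).1) (orth_le_orth (hsup a b).2.1)
  · have h1 : E.le a (E.orth (inf (E.orth a) (E.orth b))) := by
      have h := orth_le_orth (E := E) (hinf (E.orth a) (E.orth b)).1
      rwa [orth_orth] at h
    have h2 : E.le b (E.orth (inf (E.orth a) (E.orth b))) := by
      have h := orth_le_orth (E := E) (hinf (E.orth a) (E.orth b)).2.1
      rwa [orth_orth] at h
    have h3 := (hsup a b).2.2 _ h1 h2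
    have h4 := orth_le_orth h3
    rwa [orth_orth] at h4

lemma orth_inf' (a b : α) : E.orth (inf a b) = sup (E.orth a) (E.orth b) := by
  have h := orth_sup' hsup hinf hmv (E.orth a) (E.orth b)
  rw [orth_orth, orth_orth] at h
  rw [← h, orth_orth]

lemma add_inf' {a b c : α} (hab : E.D a b) (hac : E.D a c) :
    E.add a (inf b c) = inf (E.add a b) (E.add a c) := by
  have hD : E.D a (inf b c) := D_of_le_D hab (hinf b c).1
  apply le_antisymm' (E := E)
  · exact (hinf _ _).2.2 _ (add_le_add_right' hab (hinf b c).1).2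
      (add_le_add_right' hac (hinf b c).2.1).2
  · have ham : E.le a (inf (E.add a b) (E.add a c)) :=
      (hinf _ _).2.2 a ⟨b, hab, rfl⟩ ⟨c, hac, rfl⟩
    obtain ⟨e, he, he2⟩ := ham
    have heb : E.le e b := cancel_le he hab (by rw [he2]; exact (hinf _ _).1)
    have hec : E.le e c := cancel_le he hac (by rw [he2]; exact (hinf _ _).2.1)
    have h3 : E.le e (inf b c) := (hinf b c).2.2 e heb hec
    have h4 := (add_le_add_right' hD h3).2
    rw [he2] at h4
    exact h4

lemma inf_add_le' {z w : α} (hzw : E.D z w) (a : α) :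
    E.le (inf a (E.add z w)) (E.add z (inf a w)) := by
  have hma : E.le (inf a (E.add z w)) a := (hinf _ _).1
  have hms : E.le (inf a (E.add z w)) (E.add z w) := (hinf _ _).2.1
  have hzm_le : E.le (inf z (inf a (E.add z w))) (inf a (E.add z w)) :=
    (hinf z _).2.1
  obtain ⟨hs1, hs2⟩ := sub_spec hzm_le
  have hzsup : E.le z (sup z (inf a (E.add z w))) := (hsup z _).1
  obtain ⟨ht1, ht2⟩ := sub_spec hzsup
  rw [hmv z (inf a (E.add z w))] at ht1 ht2
  have hsup_le : E.le (sup z (inf a (E.add z w))) (E.add z w) :=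
    (hsup z _).2.2 _ ⟨w, hzw, rfl⟩ hms
  have hdw : E.le (E.sub (inf a (E.add z w)) (inf z (inf a (E.add z w)))) w :=
    cancel_le ht1 hzw (by rw [ht2]; exact hsup_le)
  have hdm : E.le (E.sub (inf a (E.add z w)) (inf z (inf a (E.add z w)))) (inf a (E.add z w)) :=
    ⟨inf z (inf a (E.add z w)), E.comm_def _ _ hs1,
      by rw [E.comm _ _ (E.comm_def _ _ hs1)]; exact hs2⟩
  have hda : E.le (E.sub (inf a (E.add z w)) (inf z (inf a (E.add z w)))) (inf a w) :=
    (hinf a w).2.2 _ (le_trans' hdm hma) hdw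
  have hDzaw : E.D z (inf a w) := D_of_le_D hzw (hinf a w).2.1
  have h := (add_le_add' (hinf z (inf a (E.add z w))).1 hda hDzaw).2
  rw [hs2] at h
  exact h

lemma orth_add_inf' (x y : α) :
    E.orth (E.add x (inf (E.orth x) y)) = E.sub (E.orth x) (inf (E.orth x) y) := by
  have hc : E.le (inf (E.orth x) y) (E.orth x) := (hinf _ _).1
  obtain ⟨h1, h2⟩ := sub_spec hc
  have hx : E.D x (E.add (inf (E.orth x) y) (E.sub (E.orth x) (inf (E.orth x) y))) := by
    rw [h2]; exact orth_D x
  obtain ⟨hxc, hsum, hval⟩ := assoc_rev h1 hx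
  have hone : E.add (E.add x (inf (E.orth x) y)) (E.sub (E.orth x) (inf (E.orth x) y))
      = E.one := by
    rw [← hval, h2, add_orth]
  exact (orth_unique hsum hone).symm

lemma sub_sup_orth' (x y : α) :
    E.sub (sup y (E.orth x)) y = E.sub (E.orth y) (inf (E.orth y) x) := by
  have hz : E.le (inf (E.orth y) x) (E.orth y) := (hinf _ _).1
  obtain ⟨h1, h2⟩ := sub_spec hz
  have hy : E.D y (E.add (inf (E.orth y) x) (E.sub (E.orth y) (inf (E.orth y) x))) := by
    rw [h2]; exact orth_D y
  have hcom : E.add (inf (E.orth y) x) (E.sub (E.orth y) (inf (E.orth y) x))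
      = E.add (E.sub (E.orth y) (inf (E.orth y) x)) (inf (E.orth y) x) := E.comm _ _ h1
  have hy2 : E.D y (E.add (E.sub (E.orth y) (inf (E.orth y) x)) (inf (E.orth y) x)) :=
    hcom ▸ hy
  obtain ⟨hye, hyez, hval⟩ := assoc_rev (E.comm_def _ _ h1) hy2
  have hone : E.add (E.add y (E.sub (E.orth y) (inf (E.orth y) x))) (inf (E.orth y) x)
      = E.one := by
    rw [← hval, ← hcom, h2, add_orth]
  have hz_eq : inf (E.orth y) x
      = E.orth (E.add y (E.sub (E.orth y) (inf (E.orth y) x))) := orth_unique hyez hone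
  have h3 : E.add y (E.sub (E.orth y) (inf (E.orth y) x)) = E.orth (inf (E.orth y) x) := by
    conv_rhs => rw [hz_eq, orth_orth]
  have h4 : E.orth (inf (E.orth y) x) = sup (E.orth (E.orth y)) (E.orth x) :=
    orth_inf' hsup hinf hmv _ _
  rw [orth_orth] at h4
  exact sub_unique hye (by rw [h3, h4])

lemma bp_comm' (x y : α) :
    E.add x (inf (E.orth x) y) = E.add y (inf (E.orth y) x) := by
  apply orth_inj (E := E)
  rw [orth_add_inf' hsup hinf hmv x y, orth_add_inf' hsup hinf hmv y x]
  have h1 : inf (E.orth x) y = inf y (E.orth x) := inf_comm' hsup hinf hmv _ _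
  rw [h1, ← hmv y (E.orth x), sub_sup_orth' hsup hinf hmv x y]

lemma bp_mono' {y₁ y₂ : α} (x : α) (h : E.le y₁ y₂) :
    E.le (E.add x (inf (E.orth x) y₁)) (E.add x (inf (E.orth x) y₂)) := by
  have hD : E.D x (inf (E.orth x) y₂) := D_of_le_orth (hinf _ _).1
  have hmono : E.le (inf (E.orth x) y₁) (inf (E.orth x) y₂) :=
    (hinf _ _).2.2 _ (hinf _ _).1 (le_trans' (hinf _ _).2.1 h)
  exact (add_le_add_right' hD hmono).2

lemma inf_bp_inf' (a y z : α) :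
    inf a (E.add z (inf (E.orth z) (inf a y))) = inf a (E.add z (inf (E.orth z) y)) := by
  apply le_antisymm' (E := E)
  · exact (hinf _ _).2.2 _ (hinf _ _).1
      (le_trans' (hinf _ _).2.1 (bp_mono' hsup hinf hmv z (hinf a y).2.1))
  · have hzw : E.D z (inf (E.orth z) y) := D_of_le_orth (hinf _ _).1
    have h4 := inf_add_le' hsup hinf hmv hzw a
    have heq : inf a (inf (E.orth z) y) = inf (E.orth z) (inf a y) :=
      inf_left_comm' hsup hinf hmv a _ y
    rw [heq] at h4
    exact (hinf _ _).2.2 _ (hinf _ _).1 h4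

lemma sub_claim' (a y z : α) :
    E.sub (E.sub a (inf a y)) (inf (E.sub a (inf a y)) z)
      = E.sub a (inf a (E.add y (inf (E.orth y) z))) := by
  have hca : E.le (inf a y) a := (hinf a y).1
  obtain ⟨hc, hcb⟩ := sub_spec hca
  have hdb : E.le (inf (E.sub a (inf a y)) z) (E.sub a (inf a y)) := (hinf _ _).1
  obtain ⟨hd, hde⟩ := sub_spec hdb
  have hcde : E.D (inf a y) (E.add (inf (E.sub a (inf a y)) z)
      (E.sub (E.sub a (inf a y)) (inf (E.sub a (inf a y)) z))) := by
    rw [hde]; exact hc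
  obtain ⟨hcd, hcdE, hval⟩ := assoc_rev hd hcde
  have hsum : E.add (E.add (inf a y) (inf (E.sub a (inf a y)) z))
      (E.sub (E.sub a (inf a y)) (inf (E.sub a (inf a y)) z)) = a := by
    rw [← hval, hde, hcb]
  have hstar : E.add (inf a y) (inf (E.sub a (inf a y)) z)
      = inf a (E.add y (inf (E.orth y) z)) := by
    have hbc' : E.le (E.sub a (inf a y)) (E.orth (inf a y)) := le_orth_of_D hc
    have hd_eq : inf (E.sub a (inf a y)) z
        = inf (E.sub a (inf a y)) (inf (E.orth (inf a y)) z) := by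
      apply le_antisymm' (E := E)
      · exact (hinf _ _).2.2 _ (hinf _ _).1
          ((hinf _ _).2.2 _ (le_trans' (hinf _ _).1 hbc') (hinf _ _).2.1)
      · exact (hinf _ _).2.2 _ (hinf _ _).1 (le_trans' (hinf _ _).2.1 (hinf _ _).2.1)
    have hDc2 : E.D (inf a y) (inf (E.orth (inf a y)) z) := D_of_le_orth (hinf _ _).1
    rw [hd_eq, add_inf' hsup hinf hmv hc hDc2, hcb]
    rw [bp_comm' hsup hinf hmv (inf a y) z]
    rw [inf_bp_inf' hsup hinf hmv a y z]
    rw [← bp_comm' hsup hinf hmv y z]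
  rw [hstar] at hsum hcdE
  exact (sub_unique hcdE hsum).symm

end Lattice

end EffectAlgebra
/-- in an MV-effect algebra, `x ⊞ y = x ⊕ (x' ∧ y)` makes `(M, ⊞, ', 0)`
an MV-algebra. -/
theorem stmt4 {α : Type*} (E : EffectAlgebra α) (sup inf : α → α → α)
    (hsup : ∀ a b : α, E.le a (sup a b) ∧ E.le b (sup a b) ∧
      ∀ c, E.le a c → E.le b c → E.le (sup a b) c)
    (hinf : ∀ a b : α, E.le (inf a b) a ∧ E.le (inf a b) b ∧
      ∀ c, E.le c a → E.le c b → E.le c (inf a b))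
    (hmv : ∀ a b : α, E.sub (sup a b) a = E.sub b (inf a b)) :
    let bp : α → α → α := fun x y => E.add x (inf (E.orth x) y)
    (∀ x y : α, E.D x (inf (E.orth x) y)) ∧
    (∀ x y : α, bp x y = bp y x) ∧
    (∀ x y z : α, bp (bp x y) z = bp x (bp y z)) ∧
    (∀ x : α, bp x E.zero = x) ∧
    (∀ x : α, E.orth (E.orth x) = x) ∧
    (∀ x : α, bp x (E.orth E.zero) = E.orth E.zero) ∧
    (∀ x y : α, bp x (E.orth (bp x (E.orth y))) = bp y (E.orth (bp y (E.orth x)))) := by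
  intro bp
  have orthD : ∀ x y : α, E.D x (inf (E.orth x) y) :=
    fun x y => EffectAlgebra.D_of_le_orth (hinf _ _).1
  refine ⟨orthD, ?_, ?_, ?_, ?_, ?_, ?_⟩
  · exact fun x y => EffectAlgebra.bp_comm' hsup hinf hmv x y
  · -- associativity
    intro x y z
    show E.add (E.add x (inf (E.orth x) y))
          (inf (E.orth (E.add x (inf (E.orth x) y))) z)
        = E.add x (inf (E.orth x) (E.add y (inf (E.orth y) z)))
    have bp_eq : ∀ u v : α, E.add u (inf (E.orth u) v)
        = E.orth (E.sub (E.orth u) (inf (E.orth u) v)) := by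
      intro u v
      rw [← EffectAlgebra.orth_add_inf' hsup hinf hmv u v, EffectAlgebra.orth_orth]
    rw [bp_eq (E.add x (inf (E.orth x) y)) z, bp_eq x (E.add y (inf (E.orth y) z))]
    congr 1
    rw [EffectAlgebra.orth_add_inf' hsup hinf hmv x y]
    exact EffectAlgebra.sub_claim' hsup hinf hmv (E.orth x) y z
  · -- unit
    intro x
    show E.add x (inf (E.orth x) E.zero) = x
    rw [EffectAlgebra.inf_eq_right' hsup hinf hmv (EffectAlgebra.zero_le' _),
      (EffectAlgebra.D_zero x).2]
  · exact fun x => EffectAlgebra.orth_orth x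
  · intro x
    show E.add x (inf (E.orth x) (E.orth E.zero)) = E.orth E.zero
    rw [EffectAlgebra.orth_zero,
      EffectAlgebra.inf_eq_left' hsup hinf hmv (EffectAlgebra.le_one' _),
      EffectAlgebra.add_orth]
  · -- Łukasiewicz axiom
    intro x y
    show E.add x (inf (E.orth x) (E.orth (E.add x (inf (E.orth x) (E.orth y)))))
        = E.add y (inf (E.orth y) (E.orth (E.add y (inf (E.orth y) (E.orth x)))))
    have key : ∀ u v : α,
        E.add u (inf (E.orth u) (E.orth (E.add u (inf (E.orth u) (E.orth v))))) = sup u v := by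
      intro u v
      have hs : E.le u (sup u v) := (hsup u v).1
      obtain ⟨hDc, hc⟩ := EffectAlgebra.sub_spec hs
      have hdm : inf (E.orth u) (E.orth v) = E.orth (sup u v) :=
        (EffectAlgebra.orth_sup' hsup hinf hmv u v).symm
      have h1 : E.D (E.add u (E.sub (sup u v) u)) (E.orth (sup u v)) := by
        rw [hc]; exact EffectAlgebra.orth_D _
      have hDcs : E.D (E.sub (sup u v) u) (E.orth (sup u v)) :=
        E.assoc_def₁ _ _ _ hDc h1
      have hDus : E.D u (E.add (E.sub (sup u v) u) (E.orth (sup u v))) :=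
        E.assoc_def₂ _ _ _ hDc h1
      have vone : E.add u (E.add (E.sub (sup u v) u) (E.orth (sup u v))) = E.one := by
        rw [← E.assoc _ _ _ hDc h1, hc, EffectAlgebra.add_orth]
      have hcomm : E.add (E.sub (sup u v) u) (E.orth (sup u v))
          = E.add (E.orth (sup u v)) (E.sub (sup u v) u) := E.comm _ _ hDcs
      have hDus2 : E.D u (E.add (E.orth (sup u v)) (E.sub (sup u v) u)) := hcomm ▸ hDus
      obtain ⟨hDu', hD2, hval2⟩ :=
        EffectAlgebra.assoc_rev (E.comm_def _ _ hDcs) hDus2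
      have vone2 : E.add (E.add u (E.orth (sup u v))) (E.sub (sup u v) u) = E.one := by
        rw [← hval2, ← hcomm, vone]
      have stepA : E.sub (sup u v) u = E.orth (E.add u (E.orth (sup u v))) :=
        EffectAlgebra.orth_unique hD2 vone2
      rw [hdm, ← stepA]
      have hcle : E.le (E.sub (sup u v) u) (E.orth u) := EffectAlgebra.le_orth_of_D hDc
      rw [EffectAlgebra.inf_eq_right' hsup hinf hmv hcle, hc]
    rw [key x y, key y x]
    exact EffectAlgebra.sup_comm' hsup hinf hmv x y
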